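/- Let J = [u, v] ⊂ ℂ be a segment with u ≠ v, and let w₁, …, w_k be arbitrary complex numbers. Then max_{z ∈ J} |∏_{j=1}^k (z − w_j)| ≥ 2 (|u − v| / 4)^k. -/

import Mathlib

open Polynomial Real Set

lemma T_aux : ∀ n : ℕ, (Polynomial.Chebyshev.T ℝ n).natDegree ≤ n ∧
    (Polynomial.Chebyshev.T ℝ n).coeff n = 2 ^ (n - 1) := by
  intro n
  induction n using Nat.twoStepInduction with
  | zero => simp [Polynomial.Chebyshev.T_zero]
  | one => simp [Polynomial.Chebyshev.T_one]
  | more n ih1 ih2 =>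
    have hcast : ((n + 2 : ℕ) : ℤ) = (n : ℤ) + 2 := by push_cast; ring
    have hcast1 : ((n + 1 : ℕ) : ℤ) = (n : ℤ) + 1 := by push_cast; ring
    have hT : Polynomial.Chebyshev.T ℝ ((n + 2 : ℕ) : ℤ)
        = 2 * X * Polynomial.Chebyshev.T ℝ ((n+1 : ℕ) : ℤ) - Polynomial.Chebyshev.T ℝ (n : ℤ) := by
      rw [hcast, hcast1, Polynomial.Chebyshev.T_add_two]
    constructor
    · rw [hT]
      refine le_trans (natDegree_sub_le _ _) (max_le ?_ (le_trans ih1.1 (by omega)))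
      refine le_trans (natDegree_mul_le) ?_
      have h1 : (2 * X : ℝ[X]).natDegree ≤ 1 :=
        le_trans natDegree_mul_le (by simp)
      omega
    · rw [hT]
      rw [coeff_sub, mul_assoc, coeff_ofNat_mul, show n + 2 = (n+1) + 1 from rfl, coeff_X_mul,
        ih2.2, coeff_eq_zero_of_natDegree_lt (lt_of_le_of_lt ih1.1 (by omega))]
      simp [pow_succ]
      ring

lemma cheb_core (k : ℕ) (hk : 1 ≤ k) (b : Fin k → ℝ) :
    ∃ x ∈ Set.Icc (-1:ℝ) 1, 2 * (1/2)^k ≤ |∏ j : Fin k, (x - b j)| := by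
  by_contra hcon
  push_neg at hcon
  have hkR : (k:ℝ) ≠ 0 := Nat.cast_ne_zero.2 (by omega)
  set p : ℝ[X] := ∏ j : Fin k, (X - C (b j)) with hp
  have hpmonic : p.Monic := monic_prod_of_monic _ _ fun j _ => monic_X_sub_C _
  have hpdeg : p.natDegree = k := by
    rw [hp, natDegree_prod_of_monic _ _ fun j _ => monic_X_sub_C _]
    simp
  have hpeval : ∀ x : ℝ, p.eval x = ∏ j : Fin k, (x - b j) := by
    intro x; simp [hp, eval_prod]
  set q : ℝ[X] := C ((2:ℝ)^(k-1)) * p - Polynomial.Chebyshev.T ℝ k with hq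
  -- smallness of 2^(k-1) p on [-1,1]
  have hone : (2:ℝ)^(k-1) * (2 * (1/2)^k) = 1 := by
    have : (2:ℝ)^(k-1) * 2 = 2^k := by
      rw [← pow_succ]; congr 1; omega
    rw [← mul_assoc, this, one_div, ← mul_pow]
    norm_num
  have hsmall : ∀ x ∈ Set.Icc (-1:ℝ) 1, |2^(k-1) * p.eval x| < 1 := by
    intro x hx
    have h := hcon x hx
    rw [← hpeval] at h
    rw [abs_mul, abs_pow]
    calc |(2:ℝ)|^(k-1) * |p.eval x| < |(2:ℝ)|^(k-1) * (2 * (1/2)^k) := by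
          apply mul_lt_mul_of_pos_left h
          positivity
      _ = 1 := by rw [abs_of_pos (by norm_num : (0:ℝ) < 2)]; exact hone
  -- the sign alternation
  have hmem : ∀ i : ℕ, i ≤ k → Real.cos (i * π / k) ∈ Set.Icc (-1:ℝ) 1 :=
    fun i _ => ⟨Real.neg_one_le_cos _, Real.cos_le_one _⟩
  have hqeval : ∀ i : ℕ, i ≤ k →
      q.eval (Real.cos (i * π / k)) = 2^(k-1) * p.eval (Real.cos (i * π / k)) - (-1)^i := by
    intro i hi
    rw [hq, eval_sub, eval_mul, eval_C]
    congr 1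
    rw [Polynomial.Chebyshev.T_real_cos]
    push_cast
    rw [show (k:ℝ) * (i * π / k) = i * π - 0 by field_simp; ring, Real.cos_nat_mul_pi_sub]
    simp
  have hqcos : ∀ i : ℕ, i ≤ k → (-1:ℝ)^i * q.eval (Real.cos (i * π / k)) < 0 := by
    intro i hi
    rw [hqeval i hi]
    have h1 : (-1:ℝ)^i * ((-1:ℝ)^i) = 1 := by
      rw [← pow_add]; exact (Even.add_self i).neg_one_pow
    have h2 : (-1:ℝ)^i * (2^(k-1) * p.eval (Real.cos (i * π / k)))
        ≤ |2^(k-1) * p.eval (Real.cos (i * π / k))| := by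
      calc (-1:ℝ)^i * (2^(k-1) * p.eval (Real.cos (i * π / k)))
          ≤ |(-1:ℝ)^i * (2^(k-1) * p.eval (Real.cos (i * π / k)))| := le_abs_self _
        _ = |2^(k-1) * p.eval (Real.cos (i * π / k))| := by
            rw [abs_mul, abs_pow, abs_neg, abs_one, one_pow, one_mul]
    have h3 := hsmall _ (hmem i hi)
    nlinarith [h2, h3, h1]
  -- monotonicity
  have hθmem : ∀ i : ℕ, i ≤ k → (i * π / k : ℝ) ∈ Set.Icc 0 π := by
    intro i hi
    constructor
    · positivity
    · rw [div_le_iff₀ (by positivity)]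
      have : (i:ℝ) ≤ k := Nat.cast_le.2 hi
      nlinarith [Real.pi_pos]
  have hmono : ∀ i j : ℕ, i < j → j ≤ k → Real.cos (j * π / k) < Real.cos (i * π / k) := by
    intro i j hij hj
    apply Real.strictAntiOn_cos (hθmem i (by omega)) (hθmem j hj)
    have h : (i:ℝ) * (π/k) < j * (π/k) := by
      apply mul_lt_mul_of_pos_right
      · exact_mod_cast hij
      · positivity
    simpa [mul_div_assoc] using h
  -- roots via IVT
  have hcont : Continuous fun t : ℝ => q.eval t := q.continuous
  have hroots : ∀ i : Fin k, ∃ y,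
      y ∈ Set.Ioo (Real.cos ((((i:ℕ)+1 : ℕ)) * π / k)) (Real.cos ((i:ℕ) * π / k))
      ∧ q.eval y = 0 := by
    intro i
    have hik : (i:ℕ) < k := i.isLt
    have hab : Real.cos ((((i:ℕ)+1 : ℕ)) * π / k) ≤ Real.cos ((i:ℕ) * π / k) :=
      (hmono (i:ℕ) ((i:ℕ)+1) (by omega) (by omega)).le
    set f : ℝ → ℝ := fun t => (-1:ℝ)^(i:ℕ) * q.eval t with hf
    have hfb : f (Real.cos ((i:ℕ) * π / k)) < 0 := hqcos (i:ℕ) (by omega)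
    have hfa : 0 < f (Real.cos ((((i:ℕ)+1 : ℕ)) * π / k)) := by
      have h2 := hqcos ((i:ℕ)+1) (by omega)
      have h3 : ((-1:ℝ))^((i:ℕ)+1) = -((-1:ℝ))^(i:ℕ) := by rw [pow_succ]; ring
      rw [h3] at h2
      simp only [hf]
      nlinarith [h2]
    have hfc : Continuous f := continuous_const.mul hcont
    have hiv := intermediate_value_Ioo' (f := f) hab hfc.continuousOn
    have h0 : (0:ℝ) ∈ Set.Ioo (f (Real.cos ((i:ℕ) * π / k)))
        (f (Real.cos ((((i:ℕ)+1 : ℕ)) * π / k))) := ⟨hfb, hfa⟩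
    obtain ⟨y, hy, hfy⟩ := hiv h0
    refine ⟨y, hy, ?_⟩
    have : ((-1:ℝ))^(i:ℕ) ≠ 0 := by positivity
    simp only [hf, mul_eq_zero] at hfy
    tauto
  choose y hy hy0 using hroots
  have hlt : ∀ i j : Fin k, (i:ℕ) < (j:ℕ) → y j < y i := by
    intro i j h
    have h1 : y j < Real.cos ((j:ℕ) * π / k) := (hy j).2
    have h2 : Real.cos ((j:ℕ) * π / k) ≤ Real.cos ((((i:ℕ)+1 : ℕ)) * π / k) := by
      rcases eq_or_lt_of_le (show (i:ℕ)+1 ≤ (j:ℕ) from h) with he | hlt'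
      · rw [he]
      · exact (hmono _ _ hlt' j.isLt.le).le
    have h3 : Real.cos ((((i:ℕ)+1 : ℕ)) * π / k) < y i := (hy i).1
    linarith
  have hyinj : Function.Injective y := by
    intro i j hij
    by_contra hne
    rcases lt_or_gt_of_ne (show (i:ℕ) ≠ (j:ℕ) from fun h => hne (Fin.ext h)) with h | h
    · exact absurd hij (ne_of_gt (hlt i j h))
    · exact absurd hij (ne_of_lt (hlt j i h))
  have hdeg : q.natDegree < k := by
    rcases eq_or_ne q 0 with h0 | h0
    · rw [h0]; simp; omega
    · have hle : q.natDegree ≤ k := by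
        apply le_trans (natDegree_sub_le _ _)
        apply max_le
        · exact le_trans natDegree_mul_le (by simp [natDegree_C, hpdeg])
        · exact (T_aux k).1
      have hck : q.coeff k = 0 := by
        rw [hq, coeff_sub, coeff_C_mul, (T_aux k).2, ← hpdeg, hpmonic.coeff_natDegree, hpdeg]
        ring
      rcases lt_or_eq_of_le hle with h | h
      · exact h
      · exfalso
        apply h0
        rw [← leadingCoeff_eq_zero, Polynomial.leadingCoeff, h, hck]
  have hq0 : q = 0 :=
    q.eq_zero_of_natDegree_lt_card_of_eval_eq_zero hyinj hy0 (by simpa using hdeg)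
  have hfinal := hqcos 0 (by omega)
  rw [hq0] at hfinal
  simp at hfinal

lemma cheb_unit (k : ℕ) (hk : 1 ≤ k) (a : Fin k → ℝ) :
    ∃ t ∈ Set.Icc (0:ℝ) 1, 2 * (1/4)^k ≤ |∏ j : Fin k, (t - a j)| := by
  obtain ⟨x, hx, hbound⟩ := cheb_core k hk (fun j => 2 * a j - 1)
  refine ⟨(x+1)/2, ⟨by linarith [hx.1], by linarith [hx.2]⟩, ?_⟩
  have hprod : ∏ j : Fin k, ((x+1)/2 - a j)
      = (∏ j : Fin k, (x - (2 * a j - 1))) * (1/2)^k := by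
    calc ∏ j : Fin k, ((x+1)/2 - a j) = ∏ j : Fin k, ((x - (2 * a j - 1)) * (1/2)) :=
          Finset.prod_congr rfl fun j _ => by ring
      _ = (∏ j : Fin k, (x - (2 * a j - 1))) * (1/2)^k := by
          rw [Finset.prod_mul_distrib, Finset.prod_const]; simp
  rw [hprod, abs_mul, abs_pow, abs_of_pos (by norm_num : (0:ℝ) < 1/2)]
  calc 2 * (1/4:ℝ)^k = (2 * (1/2)^k) * (1/2)^k := by
        rw [show (1/4:ℝ) = (1/2) * (1/2) by norm_num, mul_pow]; ring
    _ ≤ |∏ j : Fin k, (x - (2 * a j - 1))| * (1/2)^k := by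
        apply mul_le_mul_of_nonneg_right hbound (by positivity)

/-- Chebyshev's lower bound: a monic polynomial of degree `k` has sup norm at
least `2(|J|/4)^k` on any segment `J = [u,v]`, wherever its zeros lie. -/
theorem chebyshev_segment (u v : ℂ) (huv : u ≠ v) (k : ℕ) (hk : 1 ≤ k)
    (w : Fin k → ℂ) :
    2 * (dist u v / 4) ^ k
      ≤ sSup ((fun z => ‖∏ j : Fin k, (z - w j)‖) '' segment ℝ u v) := by
  have hd : v - u ≠ 0 := sub_ne_zero.2 (Ne.symm huv)
  set c : Fin k → ℂ := fun j => (w j - u) / (v - u) with hc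
  obtain ⟨t, ht, hbd⟩ := cheb_unit k hk (fun j => (c j).re)
  set z : ℂ := (1 - t) • u + t • v with hz
  have hzmem : z ∈ segment ℝ u v := by
    rw [segment_eq_image]
    exact ⟨t, ht, rfl⟩
  have hfac : ∀ j : Fin k, z - w j = (v - u) * ((t:ℂ) - c j) := by
    intro j
    rw [hc]
    rw [mul_sub, mul_div_cancel₀ _ hd, hz]
    simp [Complex.real_smul]
    ring
  have habs : ‖∏ j : Fin k, (z - w j)‖
      = ‖v - u‖ ^ k * ∏ j : Fin k, ‖(t:ℂ) - c j‖ := by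
    rw [show (∏ j : Fin k, (z - w j)) = ∏ j : Fin k, ((v - u) * ((t:ℂ) - c j)) from
      Finset.prod_congr rfl fun j _ => hfac j]
    rw [Finset.prod_mul_distrib, Finset.prod_const, norm_mul, norm_pow]
    simp [Finset.card_univ]
  have hterm : ∀ j : Fin k, |t - (c j).re| ≤ ‖(t:ℂ) - c j‖ := by
    intro j
    have := Complex.abs_re_le_norm ((t:ℂ) - c j)
    simpa using this
  have hprodge : ∏ j : Fin k, |t - (c j).re| ≤ ∏ j : Fin k, ‖(t:ℂ) - c j‖ :=
    Finset.prod_le_prod (fun j _ => abs_nonneg _) (fun j _ => hterm j)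
  have hdist : dist u v = ‖v - u‖ := by
    rw [Complex.dist_eq]; exact norm_sub_rev u v
  have hbd2 : 2 * (1/4:ℝ)^k ≤ ∏ j : Fin k, |t - (c j).re| := by
    rw [← Finset.abs_prod]; exact hbd
  have hK : IsCompact (segment ℝ u v) := by
    rw [segment_eq_image]
    exact isCompact_Icc.image (by continuity)
  have hcontf : Continuous fun z : ℂ => ‖∏ j : Fin k, (z - w j)‖ :=
    continuous_norm.comp (continuous_finset_prod _ fun j _ => continuous_id.sub continuous_const)
  have hbdd : BddAbove ((fun z => ‖∏ j : Fin k, (z - w j)‖) '' segment ℝ u v) :=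
    (hK.image hcontf).bddAbove
  calc 2 * (dist u v / 4) ^ k
      = ‖v - u‖ ^ k * (2 * (1/4)^k) := by
        rw [hdist, show ‖v - u‖ / 4 = ‖v - u‖ * (1/4) by ring, mul_pow]
        ring
    _ ≤ ‖v - u‖ ^ k * ∏ j : Fin k, |t - (c j).re| :=
        mul_le_mul_of_nonneg_left hbd2 (by positivity)
    _ ≤ ‖v - u‖ ^ k * ∏ j : Fin k, ‖(t:ℂ) - c j‖ :=
        mul_le_mul_of_nonneg_left hprodge (by positivity)
    _ = ‖∏ j : Fin k, (z - w j)‖ := habs.symm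
    _ ≤ sSup ((fun z => ‖∏ j : Fin k, (z - w j)‖) '' segment ℝ u v) :=
        le_csSup hbdd ⟨z, hzmem, rfl⟩
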